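/- For $n \geq 4$ and the star $S_n$ on $n$ vertices, $|\mathrm{End}(S_n)| = (n-1)^{n-1} + (n-1)$, and for any tree $T_n$ on $n$ vertices, $|\mathrm{End}(T_n)| \leq |\mathrm{End}(S_n)|$, with strict inequality whenever $T_n \neq S_n$. -/

import Mathlib

/-- The star on `n` vertices: vertex `0` is the center, adjacent to all other vertices. -/
def starGraph (n : ℕ) [NeZero n] : SimpleGraph (Fin n) where
  Adj u v := u ≠ v ∧ (u = 0 ∨ v = 0)
  symm := ⟨by rintro u v ⟨h₁, h₂⟩; exact ⟨h₁.symm, h₂.symm⟩⟩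
  loopless := ⟨by rintro u ⟨h, _⟩; exact h rfl⟩

/-- Hom of the star fixing the center, determined by a map on leaves. -/
def starHomOfFun {n : ℕ} [NeZero n] (g : {v : Fin n // v ≠ 0} → {v : Fin n // v ≠ 0}) :
    starGraph n →g starGraph n :=
  ⟨fun v => if h : v = 0 then 0 else (g ⟨v, h⟩).1, by
    rintro u v ⟨huv, h0⟩
    rcases h0 with rfl | rfl
    · simp only [dif_pos rfl, dif_neg (Ne.symm huv)]
      exact ⟨Ne.symm (g ⟨v, Ne.symm huv⟩).2, Or.inl rfl⟩
    · simp only [dif_pos rfl, dif_neg huv]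
      exact ⟨(g ⟨u, huv⟩).2, Or.inr rfl⟩⟩

/-- Hom of the star collapsing all leaves to the center. -/
def starHomOfCenter {n : ℕ} [NeZero n] (c : {v : Fin n // v ≠ 0}) :
    starGraph n →g starGraph n :=
  ⟨fun v => if v = 0 then c.1 else 0, by
    rintro u v ⟨huv, h0⟩
    rcases h0 with rfl | rfl
    · simp only [if_pos rfl, if_neg (Ne.symm huv)]
      exact ⟨c.2, Or.inr rfl⟩
    · simp only [if_pos rfl, if_neg huv]
      exact ⟨Ne.symm c.2, Or.inl rfl⟩⟩

lemma starHomOfFun_zero {n : ℕ} [NeZero n] (g : {v : Fin n // v ≠ 0} → {v : Fin n // v ≠ 0}) :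
    starHomOfFun g 0 = 0 := by
  show (if h : (0 : Fin n) = 0 then (0 : Fin n) else (g ⟨0, h⟩).1) = 0
  exact dif_pos rfl

lemma starHomOfFun_ne {n : ℕ} [NeZero n] (g : {v : Fin n // v ≠ 0} → {v : Fin n // v ≠ 0})
    (v : {v : Fin n // v ≠ 0}) : starHomOfFun g v.1 = (g v).1 := by
  show (if h : v.1 = 0 then (0 : Fin n) else (g ⟨v.1, h⟩).1) = (g v).1
  rw [dif_neg v.2]

lemma starHomOfCenter_zero {n : ℕ} [NeZero n] (c : {v : Fin n // v ≠ 0}) :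
    starHomOfCenter c 0 = c.1 := by
  show (if (0 : Fin n) = 0 then c.1 else 0) = c.1
  exact if_pos rfl

lemma starHomOfCenter_ne {n : ℕ} [NeZero n] (c : {v : Fin n // v ≠ 0})
    {v : Fin n} (hv : v ≠ 0) : starHomOfCenter c v = 0 := by
  show (if v = 0 then c.1 else 0) = 0
  exact if_neg hv

noncomputable def starEquiv (n : ℕ) [NeZero n] :
    (starGraph n →g starGraph n) ≃
      (({v : Fin n // v ≠ 0} → {v : Fin n // v ≠ 0}) ⊕ {v : Fin n // v ≠ 0}) where
  toFun f :=
    if h : f 0 = 0 then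
      .inl (fun v => ⟨f v.1, fun hz =>
        (f.map_adj (show (starGraph n).Adj 0 v.1 from ⟨(Ne.symm v.2), Or.inl rfl⟩)).1
          (h.trans hz.symm)⟩)
    else .inr ⟨f 0, h⟩
  invFun x :=
    match x with
    | .inl g => starHomOfFun g
    | .inr c => starHomOfCenter c
  left_inv f := by
    dsimp only
    by_cases h : f 0 = 0
    · rw [dif_pos h]
      refine DFunLike.ext _ _ fun v => ?_
      show starHomOfFun _ v = f v
      by_cases hv : v = 0
      · subst hv; rw [starHomOfFun_zero]; exact h.symm
      · exact starHomOfFun_ne _ ⟨v, hv⟩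
    · rw [dif_neg h]
      refine DFunLike.ext _ _ fun v => ?_
      show starHomOfCenter _ v = f v
      by_cases hv : v = 0
      · subst hv; exact starHomOfCenter_zero _
      · rw [starHomOfCenter_ne _ hv]
        have := f.map_adj (show (starGraph n).Adj 0 v from ⟨Ne.symm hv, Or.inl rfl⟩)
        rcases this.2 with h0 | h0
        · exact absurd h0 h
        · exact h0.symm
  right_inv x := by
    rcases x with g | c
    · dsimp only
      rw [dif_pos (starHomOfFun_zero g)]
      congr 1
      funext v
      exact Subtype.ext (starHomOfFun_ne g v)
    · dsimp only
      rw [dif_neg (show ¬ starHomOfCenter c 0 = 0 from (starHomOfCenter_zero c).symm ▸ c.2)]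
      congr 1

lemma star_hom_card (n : ℕ) [NeZero n] :
    Nat.card (starGraph n →g starGraph n) = (n - 1) ^ (n - 1) + (n - 1) := by
  have hcard : Nat.card {v : Fin n // v ≠ 0} = n - 1 := by
    rw [Nat.card_eq_fintype_card, Fintype.card_subtype_compl]
    simp
  rw [Nat.card_congr (starEquiv n), Nat.card_sum, Nat.card_fun, hcard]

lemma hom_card_congr {V W : Type*} {G : SimpleGraph V} {H : SimpleGraph W} (φ : G ≃g H) :
    Nat.card (G →g G) = Nat.card (H →g H) := by
  refine Nat.card_congr ⟨fun f => φ.toHom.comp (f.comp φ.symm.toHom),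
    fun f => φ.symm.toHom.comp (f.comp φ.toHom), fun f => ?_, fun f => ?_⟩ <;>
  · refine DFunLike.ext _ _ fun v => ?_
    simp

lemma iso_star_of_max_degree (n : ℕ) [NeZero n] (T : SimpleGraph (Fin n)) [DecidableRel T.Adj]
    (hT : T.IsTree) (v : Fin n) (hdeg : n - 1 ≤ T.degree v) :
    Nonempty (T ≃g starGraph n) := by
  classical
  have hn1 : 1 ≤ n := Nat.one_le_iff_ne_zero.2 (NeZero.ne n)
  have hedges : T.edgeFinset.card + 1 = n := by simpa using hT.card_edgeFinset
  have hdegle : T.degree v ≤ n - 1 := by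
    have := T.degree_lt_card_verts v
    simp only [Fintype.card_fin] at this
    omega
  have hdeg' : T.degree v = n - 1 := le_antisymm hdegle hdeg
  -- all edges are incident to v
  have hinc : T.incidenceFinset v = T.edgeFinset := by
    apply Finset.eq_of_subset_of_card_le
    · intro e he
      rw [SimpleGraph.mem_incidenceFinset] at he
      exact SimpleGraph.mem_edgeFinset.2 he.1
    · rw [SimpleGraph.card_incidenceFinset_eq_degree, hdeg']
      omega
  have hadj_mem : ∀ a b : Fin n, T.Adj a b → (a = v ∨ b = v) := by
    intro a b hab
    have : s(a, b) ∈ T.incidenceFinset v := by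
      rw [hinc, SimpleGraph.mem_edgeFinset]
      exact hab
    rw [SimpleGraph.mem_incidenceFinset] at this
    have := this.2
    simpa [Sym2.mem_iff, eq_comm] using this
  -- v is adjacent to everything else
  have hnbr : ∀ u : Fin n, u ≠ v → T.Adj v u := by
    intro u hu
    have hsub : T.neighborFinset v ⊆ Finset.univ.erase v := by
      intro u hu
      rw [SimpleGraph.mem_neighborFinset] at hu
      exact Finset.mem_erase.2 ⟨(T.ne_of_adj hu).symm, Finset.mem_univ _⟩
    have hcard : (Finset.univ.erase v).card = n - 1 := by
      rw [Finset.card_erase_of_mem (Finset.mem_univ _)]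
      simp
    have heq : T.neighborFinset v = Finset.univ.erase v := by
      apply Finset.eq_of_subset_of_card_le hsub
      rw [hcard, SimpleGraph.card_neighborFinset_eq_degree, hdeg']
    have : u ∈ T.neighborFinset v := by
      rw [heq]
      exact Finset.mem_erase.2 ⟨hu, Finset.mem_univ _⟩
    rwa [SimpleGraph.mem_neighborFinset] at this
  have hiff : ∀ a b : Fin n, T.Adj a b ↔ (a ≠ b ∧ (a = v ∨ b = v)) := by
    intro a b
    constructor
    · intro h
      exact ⟨T.ne_of_adj h, hadj_mem a b h⟩
    · rintro ⟨hne, rfl | rfl⟩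
      · exact hnbr b hne.symm
      · exact (hnbr a hne).symm
  refine ⟨⟨Equiv.swap 0 v, ?_⟩⟩
  intro a b
  show (starGraph n).Adj _ _ ↔ T.Adj a b
  rw [hiff]
  constructor
  · rintro ⟨hne, h0⟩
    refine ⟨fun h => hne (by rw [h]), ?_⟩
    rcases h0 with h0 | h0
    · left
      have := congrArg (Equiv.swap 0 v) h0
      simpa using this
    · right
      have := congrArg (Equiv.swap 0 v) h0
      simpa using this
  · rintro ⟨hne, h0⟩
    refine ⟨fun h => hne ((Equiv.swap 0 v).injective h), ?_⟩
    rcases h0 with rfl | rfl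
    · left; simp
    · right; simp

lemma pow_aux : ∀ (k a : ℕ), a ^ (k + 1) + (k + 1) * a ^ k ≤ (a + 1) ^ (k + 1) := by
  intro k
  induction k with
  | zero => intro a; simp [pow_succ]
  | succ k ih =>
    intro a
    have h := ih a
    have ha : 0 ≤ a := Nat.zero_le a
    have expand : (a ^ (k + 1) + (k + 1) * a ^ k) * (a + 1)
        = a ^ (k + 2) + (k + 2) * a ^ (k + 1) + (k + 1) * a ^ k := by ring
    calc a ^ (k + 2) + (k + 2) * a ^ (k + 1)
        ≤ (a ^ (k + 1) + (k + 1) * a ^ k) * (a + 1) := by rw [expand]; exact Nat.le_add_right _ _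
      _ ≤ (a + 1) ^ (k + 1) * (a + 1) := Nat.mul_le_mul_right _ h
      _ = (a + 1) ^ (k + 2) := by ring

lemma two_mul_pow_le (m : ℕ) (hm : 1 ≤ m) : 2 * m ^ m ≤ (m + 1) ^ m := by
  obtain ⟨k, rfl⟩ : ∃ k, m = k + 1 := ⟨m - 1, by omega⟩
  have h := pow_aux k (k + 1)
  have : (k + 1) * (k + 1) ^ k = (k + 1) ^ (k + 1) := by ring
  omega

lemma hom_card_le_of_small_degree (n : ℕ) (hn : 4 ≤ n) [NeZero n] (T : SimpleGraph (Fin n))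
    [DecidableRel T.Adj] (hT : T.IsTree) (hdeg : ∀ v, T.degree v ≤ n - 2) :
    Nat.card (T →g T) ≤ 2 * (n - 1) * (n - 2) ^ (n - 2) := by
  classical
  obtain ⟨r⟩ : Nonempty (Fin n) := Fin.pos_iff_nonempty.mp (by omega)
  -- a neighbor of r
  obtain ⟨c, hrc⟩ : ∃ c, T.Adj r c := by
    obtain ⟨w, hw⟩ := Fintype.exists_ne_of_one_lt_card (by simp; omega) r
    obtain ⟨p⟩ := hT.isConnected.preconnected r w
    exact ⟨p.getVert 1, SimpleGraph.Walk.adj_snd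
      (SimpleGraph.Walk.not_nil_of_ne (Ne.symm hw))⟩
  -- parent function
  have hpar : ∀ v : Fin n, v ≠ r → ∃ u, T.Adj u v ∧ T.dist r u + 1 = T.dist r v := by
    intro v hv
    have hreach : T.Reachable r v := hT.isConnected.preconnected r v
    obtain ⟨p, hp⟩ := hreach.exists_walk_length_eq_dist
    have hpos : 0 < T.dist r v := hreach.pos_dist_of_ne (Ne.symm hv)
    cases hq : p.reverse with
    | nil =>
      exfalso
      have := congrArg SimpleGraph.Walk.length hq
      rw [SimpleGraph.Walk.length_reverse] at this
      simp only [SimpleGraph.Walk.length_nil] at this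
      omega
    | @cons _ u _ hadj q =>
      refine ⟨u, hadj.symm, ?_⟩
      have hlen : q.length + 1 = T.dist r v := by
        have := congrArg SimpleGraph.Walk.length hq
        rw [SimpleGraph.Walk.length_reverse] at this
        simp only [SimpleGraph.Walk.length_cons] at this
        omega
      have h1 : T.dist r u ≤ q.length := by
        have := T.dist_le q.reverse
        rwa [SimpleGraph.Walk.length_reverse] at this
      have h2 : T.dist r v ≤ T.dist r u + 1 := by
        calc T.dist r v ≤ T.dist r u + T.dist u v := hT.isConnected.dist_triangle
          _ ≤ T.dist r u + 1 := by
              have : T.dist u v ≤ 1 := by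
                rw [SimpleGraph.dist_comm]
                have := T.dist_le (hadj.toWalk)
                simpa using this
              omega
      omega
  set pa : Fin n → Fin n := fun v => if h : v = r then r else (hpar v h).choose with hpa
  have pa_adj : ∀ v, v ≠ r → T.Adj (pa v) v := by
    intro v hv
    rw [hpa]
    simp only [dif_neg hv]
    exact (hpar v hv).choose_spec.1
  have pa_dist : ∀ v, v ≠ r → T.dist r (pa v) + 1 = T.dist r v := by
    intro v hv
    rw [hpa]
    simp only [dif_neg hv]
    exact (hpar v hv).choose_spec.2
  -- embeddings of neighborhoods into Fin (n-2)
  have hemb : ∀ w : Fin n, Nonempty (T.neighborSet w ↪ Fin (n - 2)) := by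
    intro w
    apply Function.Embedding.nonempty_of_card_le
    rw [SimpleGraph.card_neighborSet_eq_degree, Fintype.card_fin]
    exact hdeg w
  have e : ∀ w : Fin n, T.neighborSet w ↪ Fin (n - 2) := fun w => (hemb w).some
  -- the encoding
  set L : Type := {v : Fin n // v ≠ r ∧ v ≠ c} with hL
  have mem_nbr : ∀ (f : T →g T) (v : Fin n), v ≠ r → f v ∈ T.neighborSet (f (pa v)) :=
    fun f v hv => f.map_adj (pa_adj v hv)
  set enc : (T →g T) → T.Dart × (L → Fin (n - 2)) :=
    fun f => (⟨(f r, f c), f.map_adj hrc⟩,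
      fun v => e (f (pa v.1)) ⟨f v.1, mem_nbr f v.1 v.2.1⟩) with henc
  have embed_inj : ∀ (w w' : Fin n), w = w' → ∀ (x : Fin n) (hx : x ∈ T.neighborSet w)
      (y : Fin n) (hy : y ∈ T.neighborSet w'), e w ⟨x, hx⟩ = e w' ⟨y, hy⟩ → x = y := by
    rintro w _ rfl x hx y hy h
    have := (e w).injective h
    exact congrArg Subtype.val this
  have hinj : Function.Injective enc := by
    intro f g h
    rw [henc] at h
    have h1 := congrArg (fun p => p.1.toProd) h
    simp only at h1
    have hfr : f r = g r := congrArg Prod.fst h1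
    have hfc : f c = g c := congrArg Prod.snd h1
    have h2 := congrArg Prod.snd h
    simp only at h2
    have key : ∀ k (v : Fin n), T.dist r v = k → f v = g v := by
      intro k
      induction k using Nat.strong_induction_on with
      | _ k ih =>
        intro v hv
        by_cases hvr : v = r
        · subst hvr; exact hfr
        by_cases hvc : v = c
        · subst hvc; exact hfc
        have hdist := pa_dist v hvr
        have hpap : f (pa v) = g (pa v) := by
          refine ih (T.dist r (pa v)) ?_ _ rfl
          omega
        have hcomp := congrFun h2 (⟨v, hvr, hvc⟩ : L)
        exact embed_inj _ _ hpap _ _ _ _ hcomp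
    exact DFunLike.ext _ _ fun v => key _ v rfl
  have hle := Nat.card_le_card_of_injective enc hinj
  have hcard : Nat.card (T.Dart × (L → Fin (n - 2))) = 2 * (n - 1) * (n - 2) ^ (n - 2) := by
    have hrc' : r ≠ c := T.ne_of_adj hrc
    have hLcard : Nat.card L = n - 2 := by
      rw [hL, Nat.card_eq_fintype_card, Fintype.card_subtype]
      have : (Finset.univ.filter fun v : Fin n => v ≠ r ∧ v ≠ c)
          = Finset.univ \ {r, c} := by
        ext v
        simp [and_comm]
      rw [this, Finset.card_sdiff_of_subset (Finset.subset_univ _)]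
      rw [Finset.card_insert_of_notMem (by simpa using hrc'), Finset.card_singleton]
      simp
    have hedges : T.edgeFinset.card + 1 = n := by simpa using hT.card_edgeFinset
    have hdart : Nat.card T.Dart = 2 * (n - 1) := by
      rw [Nat.card_eq_fintype_card, SimpleGraph.dart_card_eq_twice_card_edges]
      omega
    rw [Nat.card_prod, hdart, Nat.card_fun, hLcard, Nat.card_eq_fintype_card, Fintype.card_fin]
  omega

theorem stmt_18 (n : ℕ) (hn : 4 ≤ n) [NeZero n]
    (T : SimpleGraph (Fin n)) (hT : T.IsTree) :
    Nat.card (starGraph n →g starGraph n) = (n - 1) ^ (n - 1) + (n - 1) ∧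
    Nat.card (T →g T) ≤ Nat.card (starGraph n →g starGraph n) ∧
    (¬ Nonempty (T ≃g starGraph n) →
      Nat.card (T →g T) < Nat.card (starGraph n →g starGraph n)) := by
  classical
  have hstar := star_hom_card n
  haveI : DecidableRel T.Adj := Classical.decRel _
  by_cases hiso : Nonempty (T ≃g starGraph n)
  · obtain ⟨φ⟩ := hiso
    have heq := hom_card_congr φ
    exact ⟨hstar, heq.le, fun h => absurd ⟨φ⟩ h⟩
  · have hdeg : ∀ v, T.degree v ≤ n - 2 := by
      intro v
      by_contra hc
      push_neg at hc
      exact hiso (iso_star_of_max_degree n T hT v (by omega))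
    have hb := hom_card_le_of_small_degree n hn T hT hdeg
    have harith : 2 * (n - 1) * (n - 2) ^ (n - 2) < (n - 1) ^ (n - 1) + (n - 1) := by
      have h2 := two_mul_pow_le (n - 2) (by omega)
      rw [show n - 2 + 1 = n - 1 from by omega] at h2
      calc 2 * (n - 1) * (n - 2) ^ (n - 2)
          = (n - 1) * (2 * (n - 2) ^ (n - 2)) := by ring
        _ ≤ (n - 1) * (n - 1) ^ (n - 2) := Nat.mul_le_mul_left _ h2
        _ = (n - 1) ^ (n - 2 + 1) := (pow_succ' _ _).symm
        _ = (n - 1) ^ (n - 1) := by rw [show n - 2 + 1 = n - 1 from by omega]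
        _ < (n - 1) ^ (n - 1) + (n - 1) := Nat.lt_add_of_pos_right (by omega)
    have hlt : Nat.card (T →g T) < Nat.card (starGraph n →g starGraph n) := by
      rw [hstar]; omega
    exact ⟨hstar, hlt.le, fun _ => hlt⟩
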